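/- Let R > 0 and let ω : ℝ² → ℝ be twice continuously differentiable on the closed Euclidean disk B(R) of radius R centered at the origin, satisfying the hyperbolic Monge–Ampère equation (∂²ω/∂u²)(∂²ω/∂v²) − (∂²ω/∂u∂v)² = −1 at every point of B(R). Then ∫_{B(R)} ‖D²ω‖² du dv ≥ 2π R², where ‖D²ω‖² is the squared Frobenius norm of the Hessian. Moreover, equality is attained by the two-wave saddle ω(u, v) = (1/2)(u² − v²); hence this saddle is a global minimizer of the bending energy over all solutions of the Monge–Ampère equation on B(R). -/

import Mathlib

open Real

/-- Second partial derivative `∂²ω/∂u²`. -/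
noncomputable def puu (ω : ℝ → ℝ → ℝ) (u v : ℝ) : ℝ := deriv (deriv (fun u' => ω u' v)) u

/-- Second partial derivative `∂²ω/∂v²`. -/
noncomputable def pvv (ω : ℝ → ℝ → ℝ) (u v : ℝ) : ℝ := deriv (deriv (fun v' => ω u v')) v

/-- Mixed partial derivative `∂²ω/∂u∂v`. -/
noncomputable def puv (ω : ℝ → ℝ → ℝ) (u v : ℝ) : ℝ :=
  deriv (fun v' => deriv (fun u' => ω u' v') u) v

/-- The closed Euclidean disk of radius `R` centered at the origin in `ℝ²`. -/
def closedEuclDisk (R : ℝ) : Set (ℝ × ℝ) := {p : ℝ × ℝ | p.1 ^ 2 + p.2 ^ 2 ≤ R ^ 2}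

/-- The small-slopes bending energy `∫_{B(R)} ‖D²ω‖² du dv` (squared Frobenius norm of the
Hessian). -/
noncomputable def bendE (R : ℝ) (ω : ℝ → ℝ → ℝ) : ℝ :=
  ∫ p in closedEuclDisk R, (puu ω p.1 p.2 ^ 2 + 2 * puv ω p.1 p.2 ^ 2 + pvv ω p.1 p.2 ^ 2)

/-- The two-wave saddle `ω(u,v) = (u² − v²)/2`. -/
noncomputable def saddle : ℝ → ℝ → ℝ := fun u v => (u ^ 2 - v ^ 2) / 2

open MeasureTheory

lemma volume_closedEuclDisk (R : ℝ) (hR : 0 ≤ R) :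
    volume (closedEuclDisk R) = ENNReal.ofReal R ^ 2 * NNReal.pi := by
  show volume {p : ℝ × ℝ | p.1 ^ 2 + p.2 ^ 2 ≤ R ^ 2} = ENNReal.ofReal R ^ 2 * NNReal.pi
  have h : Complex.measurableEquivRealProd ⁻¹' {p : ℝ × ℝ | p.1 ^ 2 + p.2 ^ 2 ≤ R ^ 2}
      = Metric.closedBall (0 : ℂ) R := by
    ext z
    simp only [Set.mem_preimage, Complex.measurableEquivRealProd, Metric.mem_closedBall,
      Complex.dist_eq, sub_zero, Set.mem_setOf_eq]
    constructor
    · intro hz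
      have h2 : ‖z‖ ^ 2 ≤ R ^ 2 := by
        rw [Complex.sq_norm, Complex.normSq_apply]; simpa [sq] using hz
      nlinarith [norm_nonneg z]
    · intro hz
      have h2 : ‖z‖ ^ 2 ≤ R ^ 2 := by nlinarith [norm_nonneg z]
      rw [Complex.sq_norm, Complex.normSq_apply] at h2
      simpa [sq] using h2
  rw [← Complex.volume_preserving_equiv_real_prod.measure_preimage
      ((isClosed_le (by fun_prop) continuous_const).measurableSet.nullMeasurableSet), h,
    Complex.volume_closedBall]

lemma volume_circle (R : ℝ) :
    volume {p : ℝ × ℝ | p.1 ^ 2 + p.2 ^ 2 = R ^ 2} = 0 := by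
  have h : Complex.measurableEquivRealProd ⁻¹' {p : ℝ × ℝ | p.1 ^ 2 + p.2 ^ 2 = R ^ 2}
      = Metric.sphere (0 : ℂ) |R| := by
    ext z
    simp only [Set.mem_preimage, Complex.measurableEquivRealProd, Metric.mem_sphere,
      Complex.dist_eq, sub_zero, Set.mem_setOf_eq]
    constructor
    · intro hz
      have : ‖z‖ ^ 2 = R ^ 2 := by
        rw [Complex.sq_norm, Complex.normSq_apply]; simpa [sq] using hz
      nlinarith [norm_nonneg z, abs_nonneg R, sq_abs R]
    · intro hz
      have h2 : ‖z‖ ^ 2 = R ^ 2 := by rw [hz, sq_abs]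
      rw [Complex.sq_norm, Complex.normSq_apply] at h2
      simpa [sq] using h2
  rw [← Complex.volume_preserving_equiv_real_prod.measure_preimage
      ((isClosed_eq (by fun_prop) continuous_const).measurableSet.nullMeasurableSet), h,
    Measure.addHaar_sphere]

lemma isClosed_closedEuclDisk (R : ℝ) : IsClosed (closedEuclDisk R) :=
  isClosed_le (by fun_prop) continuous_const

lemma convex_closedEuclDisk (R : ℝ) : Convex ℝ (closedEuclDisk R) := by
  intro x hx y hy a b ha hb hab
  simp only [closedEuclDisk, Set.mem_setOf_eq] at *
  have hxy : 2 * (x.1 * y.1 + x.2 * y.2) ≤ 2 * R ^ 2 := by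
    nlinarith [sq_nonneg (x.1 - y.1), sq_nonneg (x.2 - y.2)]
  have : (a • x + b • y).1 = a * x.1 + b * y.1 := rfl
  rw [this]
  have : (a • x + b • y).2 = a * x.2 + b * y.2 := rfl
  rw [this]
  have e1 : 0 ≤ a ^ 2 * (R ^ 2 - (x.1 ^ 2 + x.2 ^ 2)) :=
    mul_nonneg (sq_nonneg a) (by linarith)
  have e2 : 0 ≤ b ^ 2 * (R ^ 2 - (y.1 ^ 2 + y.2 ^ 2)) :=
    mul_nonneg (sq_nonneg b) (by linarith)
  have e3 : 0 ≤ (a * b) * (2 * R ^ 2 - 2 * (x.1 * y.1 + x.2 * y.2)) :=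
    mul_nonneg (mul_nonneg ha hb) (by linarith)
  have hab2 : (a + b) ^ 2 = 1 := by rw [hab]; ring
  nlinarith [e1, e2, e3, hab2]

lemma second_partials_eq (ω : ℝ → ℝ → ℝ) (u v : ℝ)
    (h : ContDiffAt ℝ 2 (fun p : ℝ × ℝ => ω p.1 p.2) ((u, v) : ℝ × ℝ)) :
    puu ω u v = fderiv ℝ (fderiv ℝ (fun p : ℝ × ℝ => ω p.1 p.2)) (u, v) (1, 0) (1, 0) ∧
    puv ω u v = fderiv ℝ (fderiv ℝ (fun p : ℝ × ℝ => ω p.1 p.2)) (u, v) (0, 1) (1, 0) ∧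
    pvv ω u v = fderiv ℝ (fderiv ℝ (fun p : ℝ × ℝ => ω p.1 p.2)) (u, v) (0, 1) (0, 1) := by
  set Ω : ℝ × ℝ → ℝ := fun p => ω p.1 p.2 with hΩ
  have hev : ∀ᶠ q in nhds ((u, v) : ℝ × ℝ), DifferentiableAt ℝ Ω q := by
    filter_upwards [h.eventually (by norm_num)] with q hq
    exact hq.differentiableAt (by norm_num)
  have hdf : DifferentiableAt ℝ (fderiv ℝ Ω) (u, v) :=
    (h.fderiv_right (m := 1) (le_refl 2)).differentiableAt one_ne_zero
  have hcu : HasDerivAt (fun t : ℝ => ((t, v) : ℝ × ℝ)) ((1, 0) : ℝ × ℝ) u :=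
    (hasDerivAt_id u).prodMk (hasDerivAt_const u v)
  have hcv : HasDerivAt (fun t : ℝ => ((u, t) : ℝ × ℝ)) ((0, 1) : ℝ × ℝ) v :=
    (hasDerivAt_const v u).prodMk (hasDerivAt_id v)
  have key : ∀ (c : ℝ → ℝ × ℝ) (t : ℝ) (c' w : ℝ × ℝ), HasDerivAt c c' t → c t = (u, v) →
      HasDerivAt (fun s => fderiv ℝ Ω (c s) w) (fderiv ℝ (fderiv ℝ Ω) (u, v) c' w) t := by
    intro c t c' w hc hct
    have hdf' : HasFDerivAt (fderiv ℝ Ω) (fderiv ℝ (fderiv ℝ Ω) (u, v)) (c t) := by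
      rw [hct]; exact hdf.hasFDerivAt
    have h1 : HasDerivAt (fun s => fderiv ℝ Ω (c s)) (fderiv ℝ (fderiv ℝ Ω) (u, v) c') t :=
      hdf'.comp_hasDerivAt t hc
    have := h1.clm_apply (hasDerivAt_const t w)
    simpa using this
  have slice_u : ∀ (v' : ℝ), DifferentiableAt ℝ Ω (u, v') →
      deriv (fun u'' => ω u'' v') u = fderiv ℝ Ω (u, v') (1, 0) := by
    intro v' hd
    have hcurve : HasDerivAt (fun t : ℝ => ((t, v') : ℝ × ℝ)) ((1, 0) : ℝ × ℝ) u :=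
      (hasDerivAt_id u).prodMk (hasDerivAt_const u v')
    exact (hd.hasFDerivAt.comp_hasDerivAt u hcurve).deriv
  constructor
  · -- puu
    have slice : (deriv fun u'' => ω u'' v) =ᶠ[nhds u] (fun u' => fderiv ℝ Ω (u', v) (1, 0)) := by
      have htend : Filter.Tendsto (fun u' : ℝ => ((u', v) : ℝ × ℝ)) (nhds u) (nhds (u, v)) := by
        exact (Continuous.prodMk continuous_id continuous_const).tendsto u
      filter_upwards [htend.eventually hev] with u' hd
      have hcurve : HasDerivAt (fun t : ℝ => ((t, v) : ℝ × ℝ)) ((1, 0) : ℝ × ℝ) u' :=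
        (hasDerivAt_id u').prodMk (hasDerivAt_const u' v)
      exact (hd.hasFDerivAt.comp_hasDerivAt u' hcurve).deriv
    have := slice.deriv_eq
    rw [puu, this]
    exact (key _ u (1, 0) (1, 0) hcu rfl).deriv
  constructor
  · -- puv
    have slice : (fun v' => deriv (fun u'' => ω u'' v') u) =ᶠ[nhds v]
        (fun v' => fderiv ℝ Ω (u, v') (1, 0)) := by
      have htend : Filter.Tendsto (fun v' : ℝ => ((u, v') : ℝ × ℝ)) (nhds v) (nhds (u, v)) := by
        exact (Continuous.prodMk continuous_const continuous_id).tendsto v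
      filter_upwards [htend.eventually hev] with v' hd
      exact slice_u v' hd
    have := slice.deriv_eq
    rw [puv, this]
    exact (key _ v (0, 1) (1, 0) hcv rfl).deriv
  · -- pvv
    have slice : (deriv fun v'' => ω u v'') =ᶠ[nhds v] (fun v' => fderiv ℝ Ω (u, v') (0, 1)) := by
      have htend : Filter.Tendsto (fun v' : ℝ => ((u, v') : ℝ × ℝ)) (nhds v) (nhds (u, v)) := by
        exact (Continuous.prodMk continuous_const continuous_id).tendsto v
      filter_upwards [htend.eventually hev] with v' hd
      have hcurve : HasDerivAt (fun t : ℝ => ((u, t) : ℝ × ℝ)) ((0, 1) : ℝ × ℝ) v' :=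
        (hasDerivAt_const v' u).prodMk (hasDerivAt_id v')
      exact (hd.hasFDerivAt.comp_hasDerivAt v' hcurve).deriv
    have := slice.deriv_eq
    rw [pvv, this]
    exact (key _ v (0, 1) (0, 1) hcv rfl).deriv

lemma saddle_puu (u v : ℝ) : puu saddle u v = 1 := by
  have h1 : deriv (fun u' => saddle u' v) = fun u' => u' := by
    funext u'
    have : HasDerivAt (fun u' : ℝ => (u' ^ 2 - v ^ 2) / 2) u' u' := by
      have := ((hasDerivAt_pow 2 u').sub_const (v ^ 2)).div_const 2
      simpa using this
    exact this.deriv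
  rw [puu, h1]
  simp

lemma saddle_pvv (u v : ℝ) : pvv saddle u v = -1 := by
  have h1 : deriv (fun v' => saddle u v') = fun v' => -v' := by
    funext v'
    have : HasDerivAt (fun v' : ℝ => (u ^ 2 - v' ^ 2) / 2) (-v') v' := by
      have := (((hasDerivAt_pow 2 v').const_sub (u ^ 2))).div_const 2
      refine this.congr_deriv ?_
      ring
    exact this.deriv
  rw [pvv, h1]
  simp [deriv_neg]

lemma saddle_puv (u v : ℝ) : puv saddle u v = 0 := by
  have h1 : (fun v' => deriv (fun u' => saddle u' v') u) = fun _ => u := by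
    funext v'
    have : HasDerivAt (fun u' : ℝ => (u' ^ 2 - v' ^ 2) / 2) u u := by
      have := ((hasDerivAt_pow 2 u).sub_const (v' ^ 2)).div_const 2
      simpa using this
    exact this.deriv
  rw [puv, h1]
  simp

lemma norm_one_zero : ‖((1 : ℝ), (0 : ℝ))‖ = 1 := by
  simp [Prod.norm_def]

lemma norm_zero_one : ‖((0 : ℝ), (1 : ℝ))‖ = 1 := by
  simp [Prod.norm_def]

lemma clm_bound (A : (ℝ × ℝ) →L[ℝ] ((ℝ × ℝ) →L[ℝ] ℝ)) (x y : ℝ × ℝ)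
    (hx : ‖x‖ = 1) (hy : ‖y‖ = 1) : |A x y| ≤ ‖A‖ := by
  calc |A x y| = ‖A x y‖ := rfl
    _ ≤ ‖A x‖ * ‖y‖ := (A x).le_opNorm y
    _ ≤ ‖A‖ * ‖x‖ * ‖y‖ := by
        apply mul_le_mul_of_nonneg_right (A.le_opNorm x) (norm_nonneg y)
    _ = ‖A‖ := by rw [hx, hy]; ring

set_option maxHeartbeats 2000000 in
theorem saddle_minimizes_bending (R : ℝ) (hR : 0 < R) :
    (∀ ω : ℝ → ℝ → ℝ,
      ContDiffOn ℝ 2 (fun p : ℝ × ℝ => ω p.1 p.2) (closedEuclDisk R) →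
      (∀ p ∈ closedEuclDisk R,
        puu ω p.1 p.2 * pvv ω p.1 p.2 - puv ω p.1 p.2 ^ 2 = -1) →
      2 * π * R ^ 2 ≤ bendE R ω) ∧
    (∀ u v : ℝ, puu saddle u v * pvv saddle u v - puv saddle u v ^ 2 = -1) ∧
    bendE R saddle = 2 * π * R ^ 2 := by
  have hvol : volume (closedEuclDisk R) = ENNReal.ofReal R ^ 2 * NNReal.pi :=
    volume_closedEuclDisk R hR.le
  have hvol_ne : volume (closedEuclDisk R) ≠ ⊤ := by
    rw [hvol]
    exact ENNReal.mul_ne_top (ENNReal.pow_ne_top ENNReal.ofReal_ne_top) ENNReal.coe_ne_top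
  have hvol_toReal : (volume (closedEuclDisk R)).toReal = R ^ 2 * π := by
    rw [hvol, ENNReal.toReal_mul, ENNReal.toReal_pow, ENNReal.toReal_ofReal hR.le]
    simp [NNReal.coe_real_pi]
  have hmeas : MeasurableSet (closedEuclDisk R) := (isClosed_closedEuclDisk R).measurableSet
  -- the open disk
  set U : Set (ℝ × ℝ) := {p : ℝ × ℝ | p.1 ^ 2 + p.2 ^ 2 < R ^ 2} with hU
  have hUopen : IsOpen U := isOpen_lt (by fun_prop) continuous_const
  have hUsub : U ⊆ closedEuclDisk R := by
    intro p hp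
    simp only [closedEuclDisk, Set.mem_setOf_eq]
    exact le_of_lt hp
  have hae : closedEuclDisk R =ᵐ[volume] U := by
    refine (MeasureTheory.ae_eq_set).2 ⟨?_, ?_⟩
    · refine measure_mono_null ?_ (volume_circle R)
      intro p hp
      simp only [Set.mem_diff, closedEuclDisk, Set.mem_setOf_eq, hU, not_lt] at hp
      exact le_antisymm hp.1 hp.2
    · have : U \ closedEuclDisk R = ∅ := by
        rw [Set.diff_eq_empty]; exact hUsub
      simp [this]
  refine ⟨?_, ?_, ?_⟩
  · -- lower bound
    intro ω hC2 hMA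
    set Ω : ℝ × ℝ → ℝ := fun p => ω p.1 p.2 with hΩdef
    set f : ℝ × ℝ → ℝ :=
      fun p => puu ω p.1 p.2 ^ 2 + 2 * puv ω p.1 p.2 ^ 2 + pvv ω p.1 p.2 ^ 2 with hfdef
    -- at interior points, ContDiffAt
    have hCA : ∀ p ∈ U, ContDiffAt ℝ 2 Ω p := by
      intro p hp
      exact (hC2.mono hUsub).contDiffAt (hUopen.mem_nhds hp)
    -- uniqueness of derivatives on the closed disk
    have hconv : Convex ℝ (closedEuclDisk R) := convex_closedEuclDisk R
    have hUD : UniqueDiffOn ℝ (closedEuclDisk R) := by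
      apply uniqueDiffOn_convex hconv
      refine ⟨(0, 0), ?_⟩
      apply mem_interior_iff_mem_nhds.2
      apply Filter.mem_of_superset (hUopen.mem_nhds ?_) hUsub
      simp [hU]; positivity
    -- compactness
    have hcpt : IsCompact (closedEuclDisk R) := by
      apply Metric.isCompact_of_isClosed_isBounded (isClosed_closedEuclDisk R)
      apply Bornology.IsBounded.subset (Metric.isBounded_closedBall (x := (0 : ℝ × ℝ)) (r := R))
      intro p hp
      simp only [closedEuclDisk, Set.mem_setOf_eq] at hp
      simp only [Metric.mem_closedBall, dist_zero_right, Prod.norm_def, Real.norm_eq_abs,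
        max_le_iff]
      constructor
      · nlinarith [sq_abs p.1, abs_nonneg p.1, sq_nonneg p.2]
      · nlinarith [sq_abs p.2, abs_nonneg p.2, sq_nonneg p.1]
    -- second derivative within the disk
    set g : ℝ × ℝ → (ℝ × ℝ) →L[ℝ] ℝ := fderivWithin ℝ Ω (closedEuclDisk R) with hgdef
    have hg : ContDiffOn ℝ 1 g (closedEuclDisk R) := hC2.fderivWithin hUD (by norm_num)
    have hg2 : ContinuousOn (fderivWithin ℝ g (closedEuclDisk R)) (closedEuclDisk R) :=
      hg.continuousOn_fderivWithin hUD le_rfl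
    obtain ⟨C, hC⟩ := hcpt.exists_bound_of_continuousOn (E := (ℝ × ℝ) →L[ℝ] ((ℝ × ℝ) →L[ℝ] ℝ)) hg2
    -- identification on the open disk
    have hA : ∀ p ∈ U, fderiv ℝ (fderiv ℝ Ω) p = fderivWithin ℝ g (closedEuclDisk R) p := by
      intro p hp
      have hsnp : closedEuclDisk R ∈ nhds p :=
        Filter.mem_of_superset (hUopen.mem_nhds hp) hUsub
      have hgp : g =ᶠ[nhds p] fderiv ℝ Ω := by
        filter_upwards [hUopen.mem_nhds hp] with q hq
        exact fderivWithin_of_mem_nhds (Filter.mem_of_superset (hUopen.mem_nhds hq) hUsub)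
      rw [fderivWithin_of_mem_nhds hsnp, ← hgp.fderiv_eq]
    -- second partials on the open disk
    have hpt : ∀ p ∈ U,
        puu ω p.1 p.2 = fderivWithin ℝ g (closedEuclDisk R) p (1, 0) (1, 0) ∧
        puv ω p.1 p.2 = fderivWithin ℝ g (closedEuclDisk R) p (0, 1) (1, 0) ∧
        pvv ω p.1 p.2 = fderivWithin ℝ g (closedEuclDisk R) p (0, 1) (0, 1) := by
      intro p hp
      have hca : ContDiffAt ℝ 2 Ω ((p.1, p.2) : ℝ × ℝ) := by
        rw [Prod.mk.eta]; exact hCA p hp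
      obtain ⟨h1, h2, h3⟩ := second_partials_eq ω p.1 p.2 hca
      have hAp := hA p hp
      rw [Prod.mk.eta] at h1 h2 h3
      exact ⟨by rw [h1, hAp], by rw [h2, hAp], by rw [h3, hAp]⟩
    -- comparison function
    set F : ℝ × ℝ → ℝ := fun p =>
      fderivWithin ℝ g (closedEuclDisk R) p (1, 0) (1, 0) ^ 2 +
      2 * fderivWithin ℝ g (closedEuclDisk R) p (0, 1) (1, 0) ^ 2 +
      fderivWithin ℝ g (closedEuclDisk R) p (0, 1) (0, 1) ^ 2 with hFdef
    have hfF : Set.EqOn f F U := by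
      intro p hp
      obtain ⟨h1, h2, h3⟩ := hpt p hp
      simp only [hfdef, hFdef, h1, h2, h3]
    have hFcont : ContinuousOn F U := by
      have hgU : ContinuousOn (fderivWithin ℝ g (closedEuclDisk R)) U := hg2.mono hUsub
      apply ContinuousOn.add
      apply ContinuousOn.add
      · exact (((hgU.clm_apply continuousOn_const).clm_apply continuousOn_const).pow 2)
      · exact continuousOn_const.mul
          (((hgU.clm_apply continuousOn_const).clm_apply continuousOn_const).pow 2)
      · exact (((hgU.clm_apply continuousOn_const).clm_apply continuousOn_const).pow 2)
    have hfcont : ContinuousOn f U := hFcont.congr hfF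
    -- pointwise bound
    have hfbdd : ∀ p ∈ U, |f p| ≤ 4 * C ^ 2 := by
      intro p hp
      obtain ⟨h1, h2, h3⟩ := hpt p hp
      have hCp := hC p (hUsub hp)
      have b1 : |puu ω p.1 p.2| ≤ C := by
        rw [h1]
        exact le_trans (clm_bound _ _ _ norm_one_zero norm_one_zero) hCp
      have b2 : |puv ω p.1 p.2| ≤ C := by
        rw [h2]
        exact le_trans (clm_bound _ _ _ norm_zero_one norm_one_zero) hCp
      have b3 : |pvv ω p.1 p.2| ≤ C := by
        rw [h3]
        exact le_trans (clm_bound _ _ _ norm_zero_one norm_zero_one) hCp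
      have hC0 : 0 ≤ C := le_trans (norm_nonneg _) hCp
      have sa : puu ω p.1 p.2 ^ 2 ≤ C ^ 2 := by
        nlinarith [abs_nonneg (puu ω p.1 p.2), sq_abs (puu ω p.1 p.2)]
      have sb : puv ω p.1 p.2 ^ 2 ≤ C ^ 2 := by
        nlinarith [abs_nonneg (puv ω p.1 p.2), sq_abs (puv ω p.1 p.2)]
      have sc : pvv ω p.1 p.2 ^ 2 ≤ C ^ 2 := by
        nlinarith [abs_nonneg (pvv ω p.1 p.2), sq_abs (pvv ω p.1 p.2)]
      have hnn : (0 : ℝ) ≤ f p := by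
        simp only [hfdef]; positivity
      rw [abs_of_nonneg hnn]
      simp only [hfdef]
      linarith
    -- integrability on U
    have hvolU : volume U ≠ ⊤ := by
      refine ne_top_of_le_ne_top hvol_ne (measure_mono hUsub)
    have hint : IntegrableOn f U volume := by
      refine ⟨hfcont.aestronglyMeasurable hUopen.measurableSet, ?_⟩
      apply MeasureTheory.HasFiniteIntegral.restrict_of_bounded (C := 4 * C ^ 2)
        hvolU.lt_top
      exact (ae_restrict_iff' hUopen.measurableSet).2 (Filter.Eventually.of_forall
        (fun x hx => by simpa [Real.norm_eq_abs] using hfbdd x hx))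
    -- pointwise lower bound 2 ≤ f
    have hf2 : ∀ x ∈ U, 2 ≤ f x := by
      intro x hx
      have hMA' := hMA x (hUsub hx)
      simp only [hfdef]
      nlinarith [sq_nonneg (puu ω x.1 x.2 + pvv ω x.1 x.2)]
    -- conclude
    have key : 2 * (volume U).toReal ≤ ∫ p in U, f p :=
      MeasureTheory.setIntegral_ge_of_const_le_real hUopen.measurableSet hvolU hf2 hint
    have hvolU_eq : volume U = volume (closedEuclDisk R) := (measure_congr hae).symm
    rw [bendE]
    have : (∫ p in closedEuclDisk R,
        (puu ω p.1 p.2 ^ 2 + 2 * puv ω p.1 p.2 ^ 2 + pvv ω p.1 p.2 ^ 2)) = ∫ p in U, f p :=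
      MeasureTheory.setIntegral_congr_set hae
    rw [this]
    calc 2 * π * R ^ 2 = 2 * (R ^ 2 * π) := by ring
      _ = 2 * (volume U).toReal := by rw [hvolU_eq, hvol_toReal]
      _ ≤ ∫ p in U, f p := key
  · intro u v
    rw [saddle_puu, saddle_pvv, saddle_puv]
    norm_num
  · -- value at the saddle
    rw [bendE]
    have : ∀ p : ℝ × ℝ,
        puu saddle p.1 p.2 ^ 2 + 2 * puv saddle p.1 p.2 ^ 2 + pvv saddle p.1 p.2 ^ 2 = 2 := by
      intro p
      rw [saddle_puu, saddle_pvv, saddle_puv]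
      norm_num
    simp_rw [this]
    rw [setIntegral_const, smul_eq_mul, measureReal_def, hvol_toReal]
    ring
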